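/- For every d ∈ ℕ there exists a directed ACR-GNN node classifier with exactly 3 layers, in which every out-neighbourhood aggregation function agg→ is a constant function, such that for every finite directed labelled graph G of dimension d and every node v of G, the classifier outputs true at v if and only if the edge relation of G is a strict linear order. -/

import Mathlib

/-- A strict linear order on a type `V`: an irreflexive, transitive and total
binary relation. -/
def IsStrictLinearOrderRel {V : Type} (E : V → V → Prop) : Prop :=
  (∀ v, ¬ E v v) ∧ (∀ u v w, E u v → E v w → E u w) ∧ (∀ u v : V, u ≠ v → E u v ∨ E v u)

/-- The multiset `⟦f w : w ∈ V, p w⟧` of values of `f` on the elements satisfying `p`. -/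
noncomputable def msetOf {V α : Type} [Fintype V] (p : V → Prop) (f : V → α) : Multiset α :=
  letI := Classical.decPred p
  ((Finset.univ.filter p).val.map f)

/-- A directed ACR-GNN layer: aggregation over in-neighbours, aggregation over
out-neighbours, a global readout (all mapping finite multisets of real vectors to real
vectors), and a combination function. -/
structure DACRLayer (din dout : ℕ) where
  m1 : ℕ
  m2 : ℕ
  m3 : ℕ
  aggIn : Multiset (Fin din → ℝ) → Fin m1 → ℝ
  aggOut : Multiset (Fin din → ℝ) → Fin m2 → ℝ
  read : Multiset (Fin din → ℝ) → Fin m3 → ℝ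
  comb : (Fin din → ℝ) → (Fin m1 → ℝ) → (Fin m2 → ℝ) → (Fin m3 → ℝ) → Fin dout → ℝ

/-- Applying a directed ACR-GNN layer to a directed graph with features `f`:
`λ'(v) = comb(λ(v), agg←(⟦λ(w) : E w v⟧), agg→(⟦λ(w) : E v w⟧), read(⟦λ(w) : w ∈ V⟧))`. -/
noncomputable def DACRLayer.apply {din dout : ℕ} (L : DACRLayer din dout)
    {V : Type} [Fintype V] (E : V → V → Prop) (f : V → Fin din → ℝ) :
    V → Fin dout → ℝ :=
  fun v => L.comb (f v)
    (L.aggIn (msetOf (fun w => E w v) f))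
    (L.aggOut (msetOf (fun w => E v w) f))
    (L.read (msetOf (fun _ => True) f))

/-- A `{0,1}`-label viewed as a real vector. -/
def boolVec {d : ℕ} (lab : Fin d → Bool) : Fin d → ℝ := fun i => if lab i then 1 else 0

open scoped Classical

/-- The in-degree of a vertex. -/
noncomputable def indegF {V : Type} [Fintype V] (E : V → V → Prop) (v : V) : ℕ :=
  (Finset.univ.filter (fun w => E w v)).card

lemma key {V : Type} [Fintype V] (E : V → V → Prop) (hirr : ∀ v, ¬ E v v) :
    ((Finset.univ.val.map (indegF E) = Multiset.range (Fintype.card V)) ∧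
     ∀ v, ((Finset.univ.filter (fun w => E w v)).val.map (indegF E)
        = Multiset.range (indegF E v)))
    ↔ IsStrictLinearOrderRel E := by
  constructor
  · rintro ⟨hB, hA⟩
    have hnodup : (Finset.univ.val.map (indegF E)).Nodup := by
      rw [hB]; exact Multiset.nodup_range _
    have hinj : Function.Injective (indegF E) := by
      intro a b hab
      exact Multiset.inj_on_of_nodup_map hnodup a (Finset.mem_univ_val a)
        b (Finset.mem_univ_val b) hab
    have hlt : ∀ w v, E w v ↔ indegF E w < indegF E v := by
      intro w v
      constructor
      · intro h
        have : indegF E w ∈ Multiset.range (indegF E v) := by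
          rw [← hA v]
          exact Multiset.mem_map_of_mem _ (by simp [Finset.mem_filter, h])
        simpa using this
      · intro h
        have : indegF E w ∈ (Finset.univ.filter (fun u => E u v)).val.map (indegF E) := by
          rw [hA v]; simpa using h
        obtain ⟨u, hu, hu2⟩ := Multiset.mem_map.mp this
        have hEu : E u v := (Finset.mem_filter.mp hu).2
        rwa [hinj hu2] at hEu
    refine ⟨hirr, ?_, ?_⟩
    · intro u v w h1 h2
      rw [hlt] at *
      exact h1.trans h2
    · intro u v huv
      rcases lt_or_gt_of_ne (fun h => huv (hinj h)) with h | h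
      · exact Or.inl ((hlt u v).mpr h)
      · exact Or.inr ((hlt v u).mpr h)
  · rintro ⟨_, htrans, htot⟩
    have hmono : ∀ w v, E w v → indegF E w < indegF E v := by
      intro w v h
      apply Finset.card_lt_card
      have hsub : Finset.univ.filter (fun u => E u w) ⊆ Finset.univ.filter (fun u => E u v) := by
        intro u hu
        simp only [Finset.mem_filter, Finset.mem_univ, true_and] at *
        exact htrans u w v hu h
      rw [Finset.ssubset_iff_of_subset hsub]
      exact ⟨w, by simp [h], by simp [hirr w]⟩
    have hlt : ∀ w v, E w v ↔ indegF E w < indegF E v := by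
      intro w v
      refine ⟨hmono w v, ?_⟩
      intro h
      by_contra hne
      rcases eq_or_ne w v with rfl | hwv
      · exact lt_irrefl _ h
      · rcases htot w v hwv with h1 | h1
        · exact hne h1
        · exact absurd (hmono v w h1) (by omega)
    have hinj : Function.Injective (indegF E) := by
      intro a b hab
      by_contra hne
      rcases htot a b hne with h | h
      · exact absurd hab (Nat.ne_of_lt (hmono a b h))
      · exact absurd hab.symm (Nat.ne_of_lt (hmono b a h))
    have hltn : ∀ v : V, indegF E v < Fintype.card V := by
      intro v
      have hsub : Finset.univ.filter (fun u => E u v) ⊆ Finset.univ.erase v := by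
        intro u hu
        simp only [Finset.mem_filter, Finset.mem_univ, true_and] at hu
        refine Finset.mem_erase.mpr ⟨?_, Finset.mem_univ u⟩
        rintro rfl; exact hirr u hu
      have := Finset.card_le_card hsub
      rw [Finset.card_erase_of_mem (Finset.mem_univ v), Finset.card_univ] at this
      have hpos : 0 < Fintype.card V := Fintype.card_pos_iff.mpr ⟨v⟩
      unfold indegF
      omega
    have himg : Finset.univ.image (indegF E) = Finset.range (Fintype.card V) := by
      apply Finset.eq_of_subset_of_card_le
      · intro k hk
        obtain ⟨v, _, rfl⟩ := Finset.mem_image.mp hk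
        exact Finset.mem_range.mpr (hltn v)
      · rw [Finset.card_range, Finset.card_image_of_injective _ hinj, Finset.card_univ]
    constructor
    · have := congrArg Finset.val himg
      rwa [Finset.image_val, Finset.range_val,
        Multiset.dedup_eq_self.mpr ((Finset.univ.nodup).map hinj)] at this
    · intro v
      have himg2 : (Finset.univ.filter (fun w => E w v)).image (indegF E)
          = Finset.range (indegF E v) := by
        ext k
        simp only [Finset.mem_image, Finset.mem_filter, Finset.mem_univ, true_and,
          Finset.mem_range]
        constructor
        · rintro ⟨w, hw, rfl⟩
          exact hmono w v hw
        · intro hk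
          have : k ∈ Finset.range (Fintype.card V) :=
            Finset.mem_range.mpr (hk.trans (hltn v))
          rw [← himg] at this
          obtain ⟨w, _, rfl⟩ := Finset.mem_image.mp this
          exact ⟨w, (hlt w v).mpr hk, rfl⟩
      have := congrArg Finset.val himg2
      rwa [Finset.image_val, Finset.range_val,
        Multiset.dedup_eq_self.mpr (((Finset.univ.filter (fun w => E w v)).nodup).map hinj)]
        at this

/-- Layer 1: compute the in-degree of each node. -/
noncomputable def gnnL1 (d : ℕ) : DACRLayer d 1 where
  m1 := 1
  m2 := 0
  m3 := 0
  aggIn := fun M _ => (M.card : ℝ)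
  aggOut := fun _ => Fin.elim0
  read := fun _ => Fin.elim0
  comb := fun _ a _ _ => a

/-- Layer 2: keep the in-degree, and check that the multiset of in-neighbour in-degrees
is `{0, …, k-1}` where `k` is the number of in-neighbours. -/
noncomputable def gnnL2 : DACRLayer 1 2 where
  m1 := 1
  m2 := 0
  m3 := 0
  aggIn := fun M _ =>
    if M.map (fun f => f 0) = (Multiset.range M.card).map (fun k : ℕ => (k : ℝ)) then 1 else 0
  aggOut := fun _ => Fin.elim0
  read := fun _ => Fin.elim0
  comb := fun x a _ _ i => if i = 0 then x 0 else a 0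

/-- Layer 3: the readout checks that the global multiset of in-degrees is `{0, …, n-1}`
and that every node passed the local check of layer 2. -/
noncomputable def gnnL3 : DACRLayer 2 1 where
  m1 := 0
  m2 := 0
  m3 := 1
  aggIn := fun _ => Fin.elim0
  aggOut := fun _ => Fin.elim0
  read := fun M _ =>
    if (M.map (fun f => f 0) = (Multiset.range M.card).map (fun k : ℕ => (k : ℝ))
        ∧ ∀ f ∈ M, f 1 = 1) then 1 else 0
  comb := fun _ _ _ r => r

lemma castIff {V : Type} [Fintype V] (E : V → V → Prop) (p : V → Prop)
    (M : Multiset (Fin 1 → ℝ))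
    (hM : M = msetOf p (fun w (_ : Fin 1) => ((indegF E w : ℝ)))) :
    (M.map (fun f => f 0) = (Multiset.range M.card).map (fun k : ℕ => (k : ℝ)))
    ↔ ((Finset.univ.filter p).val.map (indegF E)
        = Multiset.range (Finset.univ.filter p).card) := by
  classical
  subst hM
  rw [msetOf]
  rw [Multiset.map_map, Multiset.card_map]
  have h1 : ((Finset.filter p Finset.univ).val.map
      ((fun f : Fin 1 → ℝ => f 0) ∘ fun w (_ : Fin 1) => ((indegF E w : ℝ))))
      = ((Finset.filter p Finset.univ).val.map (indegF E)).map (fun k : ℕ => (k : ℝ)) := by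
    rw [Multiset.map_map]; rfl
  rw [h1, Finset.card_val]
  constructor
  · intro h
    exact Multiset.map_injective (Nat.cast_injective : Function.Injective ((↑) : ℕ → ℝ)) h
  · intro h
    rw [h]

lemma castMsetIff (s t : Multiset ℕ) :
    s.map (fun k : ℕ => (k : ℝ)) = t.map (fun k : ℕ => (k : ℝ)) ↔ s = t :=
  (Multiset.map_injective (Nat.cast_injective : Function.Injective ((↑) : ℕ → ℝ))).eq_iff

lemma iteOne (P : Prop) [Decidable P] : ((if P then (1 : ℝ) else 0) = 1) ↔ P := by
  split <;> simp_all

theorem stmt3 (d : ℕ) :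
    ∃ (d1 d2 d3 : ℕ) (L1 : DACRLayer d d1) (L2 : DACRLayer d1 d2) (L3 : DACRLayer d2 d3)
      (cls : (Fin d3 → ℝ) → Bool),
      (∃ y, ∀ M, L1.aggOut M = y) ∧ (∃ y, ∀ M, L2.aggOut M = y) ∧
      (∃ y, ∀ M, L3.aggOut M = y) ∧
      ∀ (V : Type) [Fintype V] (E : V → V → Prop), (∀ v, ¬ E v v) →
        ∀ (lab : V → Fin d → Bool) (v : V),
          (cls (L3.apply E (L2.apply E (L1.apply E (fun w => boolVec (lab w)))) v) = true
            ↔ IsStrictLinearOrderRel E) := by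
  classical
  refine ⟨1, 2, 1, gnnL1 d, gnnL2, gnnL3, fun z => decide (z 0 = 1),
    ⟨Fin.elim0, fun _ => rfl⟩, ⟨Fin.elim0, fun _ => rfl⟩, ⟨Fin.elim0, fun _ => rfl⟩, ?_⟩
  intro V _ E hirr lab v
  rw [← key E hirr]
  have h1 : (gnnL1 d).apply E (fun w => boolVec (lab w))
      = fun w (_ : Fin 1) => ((indegF E w : ℝ)) := by
    funext w i
    simp [DACRLayer.apply, gnnL1, msetOf, indegF, Finset.card_def, Finset.filter_val]
  rw [h1]
  set A : V → Prop := fun w =>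
    ((Finset.univ.filter (fun u => E u w)).val.map (indegF E)
      = Multiset.range (indegF E w)) with hA
  have h2 : gnnL2.apply E (fun w (_ : Fin 1) => ((indegF E w : ℝ)))
      = fun w i => if i = 0 then (indegF E w : ℝ) else (if A w then 1 else 0) := by
    funext w i
    have hc : ((msetOf (fun u => E u w) (fun w (_ : Fin 1) => ((indegF E w : ℝ)))).map
          (fun f => f 0)
        = (Multiset.range (msetOf (fun u => E u w)
            (fun w (_ : Fin 1) => ((indegF E w : ℝ)))).card).map (fun k : ℕ => (k : ℝ)))
        ↔ A w := by
      rw [msetOf, Multiset.map_map, Multiset.card_map]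
      have h1' : Multiset.map ((fun f : Fin 1 → ℝ => f 0) ∘ fun w (_ : Fin 1) => ((indegF E w : ℝ)))
          (Finset.filter (fun u => E u w) Finset.univ).val
          = ((Finset.filter (fun u => E u w) Finset.univ).val.map (indegF E)).map
              (fun k : ℕ => (k : ℝ)) := by
        rw [Multiset.map_map]; rfl
      rw [h1']
      exact castMsetIff _ _
    simp only [DACRLayer.apply, gnnL2]
    rcases eq_or_ne i 0 with rfl | hi
    · simp
    · rw [if_neg hi, if_neg hi]
      by_cases hAw : A w
      · rw [if_pos hAw, if_pos (hc.mpr hAw)]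
      · rw [if_neg hAw, if_neg (fun h => hAw (hc.mp h))]
  rw [h2]
  rw [decide_eq_true_iff]
  simp only [DACRLayer.apply, gnnL3, msetOf, decide_eq_true_iff]
  rw [iteOne]
  simp only [Finset.filter_true, Multiset.map_map, Multiset.card_map, Function.comp,
    Multiset.mem_map, Finset.mem_val, Finset.mem_univ, true_and]
  simp only [if_true]
  have hcard : Multiset.card (Finset.univ.val : Multiset V) = Fintype.card V := rfl
  rw [hcard]
  apply and_congr
  · have hmm : Multiset.map (fun x => ((indegF E x : ℝ))) Finset.univ.val
        = (Finset.univ.val.map (indegF E)).map (fun k : ℕ => (k : ℝ)) := by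
      rw [Multiset.map_map]; rfl
    rw [hmm]
    exact castMsetIff _ _
  · constructor
    · intro h w
      have h' : (if (1 : Fin 2) = 0 then ((indegF E w : ℝ)) else if A w then 1 else 0) = 1 :=
        h _ ⟨w, rfl⟩
      rw [if_neg (by decide : ¬ ((1 : Fin 2) = 0))] at h'
      by_contra hc
      rw [if_neg hc] at h'
      exact zero_ne_one h'
    · rintro h f ⟨a, rfl⟩
      show (if (1 : Fin 2) = 0 then ((indegF E a : ℝ)) else if A a then 1 else 0) = 1
      rw [if_neg (by decide : ¬ ((1 : Fin 2) = 0)), if_pos (h a)]
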